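/- For any real numbers x and y, |σ(x) − σ(y)| ≥ exp(−|x| − 3) · min(1, |x − y|), where σ(t) = e^t/(1 + e^t) is the sigmoid function. -/

import Mathlib

lemma sig_hasDeriv (t : ℝ) :
    HasDerivAt (fun t => Real.exp t / (1 + Real.exp t))
      (Real.exp t / (1 + Real.exp t) ^ 2) t := by
  have h0 : (1 : ℝ) + Real.exp t ≠ 0 := by positivity
  have h := (Real.hasDerivAt_exp t).div
    ((hasDerivAt_const t (1 : ℝ)).add (Real.hasDerivAt_exp t)) h0
  refine h.congr_deriv ?_
  simp only [Pi.add_apply]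
  field_simp
  ring

lemma sig_deriv_lb (c : ℝ) :
    Real.exp (-|c|) / 4 ≤ Real.exp c / (1 + Real.exp c) ^ 2 := by
  set m := max c 0 with hm
  have h2 : (1 : ℝ) ≤ Real.exp m := by
    rw [← Real.exp_zero]; exact Real.exp_le_exp.mpr (le_max_right c 0)
  have h3 : Real.exp c ≤ Real.exp m := Real.exp_le_exp.mpr (le_max_left c 0)
  have h4 : (1 + Real.exp c) ^ 2 ≤ 4 * Real.exp m ^ 2 := by nlinarith [Real.exp_pos c]
  have hid : Real.exp (-|c|) / 4 = Real.exp c / (4 * Real.exp m ^ 2) := by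
    have hmc : -|c| = c - 2 * m := by
      rcases le_total 0 c with h | h
      · rw [abs_of_nonneg h, hm, max_eq_left h]; ring
      · rw [abs_of_nonpos h, hm, max_eq_right h]; ring
    rw [hmc, Real.exp_sub]
    have : Real.exp (2 * m) = Real.exp m ^ 2 := by
      rw [two_mul, Real.exp_add, sq]
    rw [this]
    field_simp
  rw [hid]
  apply div_le_div_of_nonneg_left (Real.exp_pos c).le (by positivity) h4

lemma sig_gap (a b : ℝ) (hab : a < b) :
    Real.exp (-(max |a| |b|) - 2) * (b - a) ≤
      Real.exp b / (1 + Real.exp b) - Real.exp a / (1 + Real.exp a) := by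
  obtain ⟨c, hc, hceq⟩ := exists_hasDerivAt_eq_slope
    (fun t => Real.exp t / (1 + Real.exp t))
    (fun t => Real.exp t / (1 + Real.exp t) ^ 2) hab
    (fun t _ => (sig_hasDeriv t).continuousAt.continuousWithinAt)
    (fun t _ => sig_hasDeriv t)
  have hcabs : |c| ≤ max |a| |b| := by
    have h1 := neg_abs_le a
    have h2 := le_abs_self b
    have h3 := le_max_left |a| |b|
    have h4 := le_max_right |a| |b|
    rw [abs_le]
    constructor <;> linarith [hc.1, hc.2]
  have h4 : Real.exp (-2 : ℝ) ≤ 1 / 4 := by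
    rw [Real.exp_neg]
    have he1 : (2 : ℝ) ≤ Real.exp 1 := by linarith [Real.add_one_le_exp (1 : ℝ)]
    have he2 : (4 : ℝ) ≤ Real.exp 2 := by
      have : Real.exp (2 : ℝ) = Real.exp 1 * Real.exp 1 := by
        rw [← Real.exp_add]; norm_num
      nlinarith
    rw [inv_le_comm₀ (Real.exp_pos 2) (by norm_num)] at *
    · linarith
  have hlb : Real.exp (-(max |a| |b|) - 2) ≤ Real.exp c / (1 + Real.exp c) ^ 2 := by
    refine le_trans ?_ (sig_deriv_lb c)
    rw [sub_eq_add_neg, Real.exp_add]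
    have hA : Real.exp (-(max |a| |b|)) ≤ Real.exp (-|c|) :=
      Real.exp_le_exp.mpr (by linarith)
    have := Real.exp_pos (-(max |a| |b|))
    nlinarith [Real.exp_pos (-|c|)]
  have heq : Real.exp b / (1 + Real.exp b) - Real.exp a / (1 + Real.exp a)
      = Real.exp c / (1 + Real.exp c) ^ 2 * (b - a) := by
    rw [hceq, div_mul_cancel₀ _ (show b - a ≠ 0 by linarith)]
  rw [heq]
  exact mul_le_mul_of_nonneg_right hlb (by linarith)

lemma sig_mono {a b : ℝ} (h : a ≤ b) :
    Real.exp a / (1 + Real.exp a) ≤ Real.exp b / (1 + Real.exp b) := by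
  rw [div_le_div_iff₀ (by positivity) (by positivity)]
  nlinarith [Real.exp_le_exp.mpr h, Real.exp_pos a, Real.exp_pos b]

/-- Anti-Lipschitz bound for the sigmoid `σ(t) = exp t / (1 + exp t)`:
`|σ x − σ y| ≥ exp(−|x| − 3) * min 1 |x − y|`. -/
theorem stmt3 (x y : ℝ) :
    Real.exp (-|x| - 3) * min 1 |x - y| ≤
      |Real.exp x / (1 + Real.exp x) - Real.exp y / (1 + Real.exp y)| := by
  rcases lt_trichotomy x y with h | h | h
  · -- x < y
    set b := min y (x + 1) with hb
    have hxb : x < b := lt_min h (by linarith)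
    have hby : b ≤ y := min_le_left _ _
    have hbx1 : b ≤ x + 1 := min_le_right _ _
    have hbsub : b - x = min 1 |x - y| := by
      rw [abs_sub_comm, abs_of_pos (show (0:ℝ) < y - x by linarith), hb]
      rcases le_total y (x + 1) with h1 | h1
      · rw [min_eq_left h1, min_eq_right (by linarith)]
      · rw [min_eq_right h1, min_eq_left (by linarith)]; ring
    have habs : max |x| |b| ≤ |x| + 1 := by
      apply max_le (by linarith)
      rw [abs_le]
      constructor <;> linarith [neg_abs_le x, le_abs_self x]
    have hexp : Real.exp (-|x| - 3) ≤ Real.exp (-(max |x| |b|) - 2) :=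
      Real.exp_le_exp.mpr (by linarith)
    have hgap := sig_gap x b hxb
    have hmono := sig_mono hby
    have hmono2 := sig_mono hxb.le
    have hR : |Real.exp x / (1 + Real.exp x) - Real.exp y / (1 + Real.exp y)|
        = Real.exp y / (1 + Real.exp y) - Real.exp x / (1 + Real.exp x) := by
      rw [abs_sub_comm]; exact abs_of_nonneg (by linarith)
    rw [hR]
    have hmin : (0 : ℝ) ≤ min 1 |x - y| := le_min (by norm_num) (abs_nonneg _)
    calc Real.exp (-|x| - 3) * min 1 |x - y|
        ≤ Real.exp (-(max |x| |b|) - 2) * (b - x) := by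
          rw [hbsub]; exact mul_le_mul_of_nonneg_right hexp hmin
      _ ≤ Real.exp b / (1 + Real.exp b) - Real.exp x / (1 + Real.exp x) := hgap
      _ ≤ Real.exp y / (1 + Real.exp y) - Real.exp x / (1 + Real.exp x) := by linarith
  · subst h; simp
  · -- y < x
    set a := max y (x - 1) with ha
    have hax : a < x := max_lt h (by linarith)
    have hya : y ≤ a := le_max_left _ _
    have hax1 : x - 1 ≤ a := le_max_right _ _
    have hasub : x - a = min 1 |x - y| := by
      rw [abs_of_pos (show (0:ℝ) < x - y by linarith), ha]
      rcases le_total y (x - 1) with h1 | h1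
      · rw [max_eq_right h1, min_eq_left (by linarith)]; ring
      · rw [max_eq_left h1, min_eq_right (by linarith)]
    have habs : max |a| |x| ≤ |x| + 1 := by
      apply max_le _ (by linarith)
      rw [abs_le]
      constructor <;> linarith [neg_abs_le x, le_abs_self x]
    have hexp : Real.exp (-|x| - 3) ≤ Real.exp (-(max |a| |x|) - 2) :=
      Real.exp_le_exp.mpr (by linarith)
    have hgap := sig_gap a x hax
    have hmono := sig_mono hya
    have hmono2 := sig_mono hax.le
    have hR : |Real.exp x / (1 + Real.exp x) - Real.exp y / (1 + Real.exp y)|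
        = Real.exp x / (1 + Real.exp x) - Real.exp y / (1 + Real.exp y) :=
      abs_of_nonneg (by linarith)
    rw [hR]
    have hmin : (0 : ℝ) ≤ min 1 |x - y| := le_min (by norm_num) (abs_nonneg _)
    calc Real.exp (-|x| - 3) * min 1 |x - y|
        ≤ Real.exp (-(max |a| |x|) - 2) * (x - a) := by
          rw [hasub]; exact mul_le_mul_of_nonneg_right hexp hmin
      _ ≤ Real.exp x / (1 + Real.exp x) - Real.exp a / (1 + Real.exp a) := hgap
      _ ≤ Real.exp x / (1 + Real.exp x) - Real.exp y / (1 + Real.exp y) := by linarith
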